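/- If E is an extension of (W,D) with generating default set GD(W,D,E), then E = Th(W ∪ Conseq(GD(W,D,E))), i.e., E is the deductive closure of W together with the consequents of its generating defaults. -/
import Mathlib


/-- Propositional formulas over natural-number atoms. -/
inductive PForm where
  | atom : ℕ → PForm
  | neg : PForm → PForm
  | conj : PForm → PForm → PForm
  | disj : PForm → PForm → PForm
deriving DecidableEq

/-- Satisfaction of a formula under a valuation. -/
def PForm.sat (v : ℕ → Prop) : PForm → Prop
  | .atom n => v n
  | .neg f => ¬ f.sat v
  | .conj f g => f.sat v ∧ g.sat v
  | .disj f g => f.sat v ∨ g.sat v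

/-- Propositional deductive closure (semantic consequence). -/
def Th (S : Set PForm) : Set PForm :=
  {φ | ∀ v : ℕ → Prop, (∀ ψ ∈ S, ψ.sat v) → φ.sat v}

/-- Propositional entailment `S ⊢ φ`. -/
def Entails (S : Set PForm) (φ : PForm) : Prop := φ ∈ Th S

/-- A default rule (α : β₁,…,βₙ / γ). -/
structure DRule where
  prereq : PForm
  justifs : List PForm
  conseq : PForm

/-- Consequents of a set of defaults. -/
def Conseq (Δ : Set DRule) : Set PForm := DRule.conseq '' Δ

/-- The defining properties of Γ(S): `T` contains `W`, is deductively closed,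
and is closed under defaults applicable w.r.t. `S`. -/
def GammaClosed (W : Set PForm) (D : Set DRule) (S T : Set PForm) : Prop :=
  W ⊆ T ∧ Th T = T ∧
  ∀ δ ∈ D, δ.prereq ∈ T → (∀ β ∈ δ.justifs, PForm.neg β ∉ S) → δ.conseq ∈ T

/-- Γ(S): the smallest set satisfying `GammaClosed`. -/
def Gamma (W : Set PForm) (D : Set DRule) (S : Set PForm) : Set PForm :=
  ⋂₀ {T | GammaClosed W D S T}

/-- Reiter extension: fixed point of Γ. -/
def IsExtension (W : Set PForm) (D : Set DRule) (E : Set PForm) : Prop :=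
  Gamma W D E = E

/-- Generating default set of `E`. -/
def GD (W : Set PForm) (D : Set DRule) (E : Set PForm) : Set DRule :=
  {δ ∈ D | δ.prereq ∈ E ∧ ∀ β ∈ δ.justifs, PForm.neg β ∉ E}

/-- Groundedness of a (finite) set of defaults. -/
def Grounded (W : Set PForm) (Δ : Set DRule) : Prop :=
  ∃ L : List DRule, L.Nodup ∧ {δ | δ ∈ L} = Δ ∧
    ∀ i (h : i < L.length),
      Entails (W ∪ Conseq {δ | δ ∈ L.take i}) (L.get ⟨i, h⟩).prereq

lemma Th_mono {S T : Set PForm} (h : S ⊆ T) : Th S ⊆ Th T :=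
  fun _ hφ v hv => hφ v (fun ψ hψ => hv ψ (h hψ))

lemma subset_Th (S : Set PForm) : S ⊆ Th S :=
  fun ψ hψ _ hv => hv ψ hψ

lemma Th_Th (S : Set PForm) : Th (Th S) = Th S := by
  apply Set.Subset.antisymm
  · intro φ hφ v hv
    exact hφ v (fun ψ hψ => hψ v hv)
  · exact subset_Th _

lemma Gamma_closed (W : Set PForm) (D : Set DRule) (S : Set PForm) :
    GammaClosed W D S (Gamma W D S) := by
  refine ⟨?_, ?_, ?_⟩
  · intro φ hφ T hT
    exact hT.1 hφ
  · apply Set.Subset.antisymm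
    · intro φ hφ T hT
      have : Th (Gamma W D S) ⊆ Th T := Th_mono (fun x hx => hx T hT)
      have := this hφ
      rwa [hT.2.1] at this
    · exact subset_Th _
  · intro δ hδ hpre hjust T hT
    exact hT.2.2 δ hδ (hpre T hT) hjust

theorem extension_eq_closure_of_generating_defaults
    (W : Set PForm) (D : Set DRule) (E : Set PForm)
    (hE : IsExtension W D E) :
    E = Th (W ∪ Conseq (GD W D E)) := by
  have hEc : GammaClosed W D E E := by
    have := Gamma_closed W D E
    rwa [hE] at this
  -- first: Th (W ∪ Conseq (GD W D E)) ⊆ E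
  have h1 : Th (W ∪ Conseq (GD W D E)) ⊆ E := by
    have hsub : W ∪ Conseq (GD W D E) ⊆ E := by
      intro φ hφ
      rcases hφ with hφ | ⟨δ, hδ, rfl⟩
      · exact hEc.1 hφ
      · exact hEc.2.2 δ hδ.1 hδ.2.1 hδ.2.2
    have := Th_mono hsub
    rw [hEc.2.1] at this
    exact this
  -- second: E ⊆ Th (W ∪ Conseq (GD W D E)), via minimality of Gamma
  have h2 : E ⊆ Th (W ∪ Conseq (GD W D E)) := by
    have hTc : GammaClosed W D E (Th (W ∪ Conseq (GD W D E))) := by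
      refine ⟨?_, Th_Th _, ?_⟩
      · exact (Set.subset_union_left).trans (subset_Th _)
      · intro δ hδ hpre hjust
        have hδGD : δ ∈ GD W D E := ⟨hδ, h1 hpre, hjust⟩
        exact subset_Th _ (Or.inr ⟨δ, hδGD, rfl⟩)
    intro φ hφ
    rw [← hE] at hφ
    exact hφ _ hTc
  exact Set.Subset.antisymm h2 h1
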